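/- Let D ∈ ℝ^{n×N} be a tight frame and A ∈ ℝ^{m×n} satisfy D-RIP₁(t, δ) with t = 25s and δ = 1/5. Suppose h ∈ ℝ^n satisfies ‖Ah‖₁ = 1 and ‖D*h‖₁ ≤ (5/2)√s. Then ‖D*h‖₂ ≥ 5/12, and consequently ‖D*h‖₁ ≤ 6√s ‖D*h‖₂, i.e. h is effectively 36s-analysis-sparse. -/

import Mathlib

noncomputable def norm2 {ι : Type*} [Fintype ι] (x : ι → ℝ) : ℝ :=
  Real.sqrt (∑ i, x i ^ 2)

noncomputable def norm1 {ι : Type*} [Fintype ι] (x : ι → ℝ) : ℝ := ∑ i, |x i|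

open Finset Matrix

lemma norm1_nonneg {ι : Type*} [Fintype ι] (x : ι → ℝ) : 0 ≤ norm1 x :=
  Finset.sum_nonneg fun i _ => abs_nonneg _

lemma norm2_nonneg {ι : Type*} [Fintype ι] (x : ι → ℝ) : 0 ≤ norm2 x :=
  Real.sqrt_nonneg _

lemma norm2_sq {ι : Type*} [Fintype ι] (x : ι → ℝ) : (norm2 x) ^ 2 = ∑ i, x i ^ 2 :=
  Real.sq_sqrt (Finset.sum_nonneg fun i _ => sq_nonneg _)

/-- contraction: if D * Dᵀ = 1 then ‖D y‖₂ ≤ ‖y‖₂. -/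
lemma norm2_mulVec_le {n N : ℕ} (D : Matrix (Fin n) (Fin N) ℝ)
    (hD : D * D.transpose = 1) (y : Fin N → ℝ) :
    norm2 (D.mulVec y) ≤ norm2 y := by
  set z := D.mulVec y with hz
  have h1 : ∑ i, z i ^ 2 = z ⬝ᵥ D.mulVec y := by
    simp [dotProduct, hz, sq]
  have h2' : ∀ w : Fin N → ℝ, z ⬝ᵥ D.mulVec w = (D.transpose.mulVec z) ⬝ᵥ w := by
    intro w
    rw [Matrix.dotProduct_mulVec, Matrix.mulVec_transpose]
  have h2 := h2' y
  have h3 : ∑ j, (D.transpose.mulVec z) j ^ 2 = ∑ i, z i ^ 2 := by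
    have : ∑ j, (D.transpose.mulVec z) j ^ 2 = (D.transpose.mulVec z) ⬝ᵥ (D.transpose.mulVec z) := by
      simp [dotProduct, sq]
    rw [this]
    rw [← h2' (D.transpose.mulVec z), Matrix.mulVec_mulVec, hD, Matrix.one_mulVec]
    simp [dotProduct, sq]
  -- Cauchy-Schwarz
  have hCS : ((D.transpose.mulVec z) ⬝ᵥ y) ^ 2
      ≤ (∑ j, (D.transpose.mulVec z) j ^ 2) * ∑ j, y j ^ 2 := by
    simpa [dotProduct] using Finset.sum_mul_sq_le_sq_mul_sq Finset.univ (D.transpose.mulVec z) y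
  have key : (∑ i, z i ^ 2) ^ 2 ≤ (∑ i, z i ^ 2) * ∑ j, y j ^ 2 := by
    calc (∑ i, z i ^ 2) ^ 2 = ((D.transpose.mulVec z) ⬝ᵥ y) ^ 2 := by rw [h1, h2]
    _ ≤ (∑ j, (D.transpose.mulVec z) j ^ 2) * ∑ j, y j ^ 2 := hCS
    _ = (∑ i, z i ^ 2) * ∑ j, y j ^ 2 := by rw [h3]
  have hzq : 0 ≤ ∑ i, z i ^ 2 := Finset.sum_nonneg fun i _ => sq_nonneg _
  rcases eq_or_lt_of_le hzq with h0 | h0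
  · rw [norm2, ← h0, Real.sqrt_zero]; exact norm2_nonneg y
  · have : ∑ i, z i ^ 2 ≤ ∑ j, y j ^ 2 := by
      have := key
      nlinarith
    exact Real.sqrt_le_sqrt this

/-- If at most one coordinate of `v` lies strictly between 0 and τ, and the total
sum is at most `r * τ`, then `v` has at most `r` nonzero coordinates. -/
lemma sparse_of_extreme {N r : ℕ} {τ : ℝ} (hτ : 0 < τ) (v : Fin N → ℝ)
    (h0 : ∀ j, 0 ≤ v j) (h1 : ∀ j, v j ≤ τ)
    (hsum : ∑ j, v j ≤ r * τ)
    (hP : (Finset.univ.filter fun j => 0 < v j ∧ v j < τ).card ≤ 1) :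
    (Finset.univ.filter fun j => v j ≠ 0).card ≤ r := by
  classical
  set P := Finset.univ.filter fun j => 0 < v j ∧ v j < τ with hPdef
  set Fl := Finset.univ.filter fun j => v j = τ with hFldef
  have hsupp : (Finset.univ.filter fun j => v j ≠ 0) ⊆ P ∪ Fl := by
    intro j hj
    simp only [mem_filter, mem_univ, true_and] at hj
    have hpos : 0 < v j := lt_of_le_of_ne (h0 j) (Ne.symm hj)
    rcases lt_or_eq_of_le (h1 j) with hlt | heq
    · exact Finset.mem_union_left _ (by simp [hPdef, hpos, hlt])
    · exact Finset.mem_union_right _ (by simp [hFldef, heq])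
  have hFlsum : (Fl.card : ℝ) * τ ≤ ∑ j, v j := by
    have h1' : ∑ j ∈ Fl, v j = (Fl.card : ℝ) * τ := by
      rw [Finset.sum_congr rfl (fun j hj => by
        simp only [hFldef, mem_filter] at hj; exact hj.2)]
      simp [mul_comm]
    calc (Fl.card : ℝ) * τ = ∑ j ∈ Fl, v j := h1'.symm
      _ ≤ ∑ j, v j := Finset.sum_le_sum_of_subset_of_nonneg (Finset.subset_univ _)
          (fun j _ _ => h0 j)
  interval_cases hc : P.card
  · -- P empty
    have hPe : P = ∅ := Finset.card_eq_zero.mp hc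
    have hsub : (Finset.univ.filter fun j => v j ≠ 0) ⊆ Fl := by
      intro j hj; have := hsupp hj; rwa [hPe, Finset.empty_union] at this
    have : (Fl.card : ℝ) * τ ≤ (r : ℝ) * τ := le_trans hFlsum hsum
    have hFlr : Fl.card ≤ r := by
      have := le_of_mul_le_mul_right this hτ
      exact_mod_cast this
    exact le_trans (Finset.card_le_card hsub) hFlr
  · -- P singleton
    obtain ⟨j₀, hj₀⟩ := Finset.card_eq_one.mp hc
    have hj₀P : j₀ ∈ P := by rw [hj₀]; exact Finset.mem_singleton_self _
    simp only [hPdef, mem_filter, mem_univ, true_and] at hj₀P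
    have hj₀Fl : j₀ ∉ Fl := by
      simp only [hFldef, mem_filter, mem_univ, true_and]
      exact ne_of_lt hj₀P.2
    have hstrict : (Fl.card : ℝ) * τ + v j₀ ≤ ∑ j, v j := by
      have h1' : ∑ j ∈ insert j₀ Fl, v j = v j₀ + ∑ j ∈ Fl, v j :=
        Finset.sum_insert hj₀Fl
      have h2' : ∑ j ∈ Fl, v j = (Fl.card : ℝ) * τ := by
        rw [Finset.sum_congr rfl (fun j hj => by
          simp only [hFldef, mem_filter] at hj; exact hj.2)]
        simp [mul_comm]
      have := Finset.sum_le_sum_of_subset_of_nonneg (Finset.subset_univ (insert j₀ Fl))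
          (fun j _ _ => h0 j)
      rw [h1', h2'] at this; linarith
  -- so Fl.card < r
    have : (Fl.card : ℝ) * τ < (r : ℝ) * τ := by
      have := hj₀P.1; linarith
    have hFlr : Fl.card < r := by
      by_contra hcon
      push_neg at hcon
      have : (r : ℝ) * τ ≤ (Fl.card : ℝ) * τ :=
        mul_le_mul_of_nonneg_right (by exact_mod_cast hcon) (le_of_lt hτ)
      linarith
    have := Finset.card_le_card hsupp
    have hcu := Finset.card_union_le P Fl
    omega

/-- Convex decomposition: a vector with entries in [0,τ] and total mass ≤ r·τ lies in the
convex hull of r-sparse vectors with entries in [0,τ]. -/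
lemma decomp_lemma {N : ℕ} (r : ℕ) (τ : ℝ) (hτ : 0 < τ) :
    ∀ (k : ℕ) (v : Fin N → ℝ), (∀ j, 0 ≤ v j) → (∀ j, v j ≤ τ) →
      (∑ j, v j) ≤ r * τ →
      (Finset.univ.filter fun j => 0 < v j ∧ v j < τ).card ≤ k →
      v ∈ convexHull ℝ {w : Fin N → ℝ | (∀ j, 0 ≤ w j) ∧ (∀ j, w j ≤ τ) ∧
        (Finset.univ.filter fun j => w j ≠ 0).card ≤ r} := by
  classical
  intro k
  induction k with
  | zero =>
    intro v h0 h1 hsum hP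
    exact subset_convexHull ℝ _ ⟨h0, h1, sparse_of_extreme hτ v h0 h1 hsum (le_trans hP (by norm_num))⟩
  | succ k ih =>
    intro v h0 h1 hsum hP
    by_cases hP1 : (Finset.univ.filter fun j => 0 < v j ∧ v j < τ).card ≤ 1
    · exact subset_convexHull ℝ _ ⟨h0, h1, sparse_of_extreme hτ v h0 h1 hsum hP1⟩
    push_neg at hP1
    obtain ⟨j, hj, j', hj', hne⟩ := Finset.one_lt_card.mp hP1
    simp only [mem_filter, mem_univ, true_and] at hj hj'
    set ε₁ := min (τ - v j) (v j') with hε₁def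
    set ε₂ := min (v j) (τ - v j') with hε₂def
    have hε₁ : 0 < ε₁ := lt_min (by linarith [hj.2]) hj'.1
    have hε₂ : 0 < ε₂ := lt_min hj.1 (by linarith [hj'.2])
    have hε₁le1 : ε₁ ≤ τ - v j := min_le_left _ _
    have hε₁le2 : ε₁ ≤ v j' := min_le_right _ _
    have hε₂le1 : ε₂ ≤ v j := min_le_left _ _
    have hε₂le2 : ε₂ ≤ τ - v j' := min_le_right _ _
    set a : Fin N → ℝ := fun i => if i = j then v j + ε₁ else if i = j' then v j' - ε₁ else v i with hadef
    set b : Fin N → ℝ := fun i => if i = j then v j - ε₂ else if i = j' then v j' + ε₂ else v i with hbdef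
    have haj : a j = v j + ε₁ := by simp [hadef]
    have haj' : a j' = v j' - ε₁ := by simp [hadef, hne.symm]
    have hbj : b j = v j - ε₂ := by simp [hbdef]
    have hbj' : b j' = v j' + ε₂ := by simp [hbdef, hne.symm]
    have haother : ∀ i, i ≠ j → i ≠ j' → a i = v i := by
      intro i hij hij'; simp [hadef, hij, hij']
    have hbother : ∀ i, i ≠ j → i ≠ j' → b i = v i := by
      intro i hij hij'; simp [hbdef, hij, hij']
    -- sums are preserved
    have hsum_gen : ∀ (c : Fin N → ℝ), c j - v j + (c j' - v j') = 0 →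
        (∀ i, i ≠ j → i ≠ j' → c i = v i) → ∑ i, c i = ∑ i, v i := by
      intro c hc hco
      have : ∑ i, (c i - v i) = 0 := by
        rw [← Finset.sum_subset (Finset.subset_univ ({j, j'} : Finset (Fin N)))
          (fun i _ hni => by
            simp only [Finset.mem_insert, Finset.mem_singleton, not_or] at hni
            rw [hco i hni.1 hni.2]; ring)]
        rw [Finset.sum_pair hne]
        linarith
      have h2 : ∑ i, (c i - v i) = ∑ i, c i - ∑ i, v i := Finset.sum_sub_distrib c v
      linarith
    have hasum : ∑ i, a i = ∑ i, v i := hsum_gen a (by rw [haj, haj']; ring) haother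
    have hbsum : ∑ i, b i = ∑ i, v i := hsum_gen b (by rw [hbj, hbj']; ring) hbother
    -- bounds for a
    have ha0 : ∀ i, 0 ≤ a i := by
      intro i
      rcases eq_or_ne i j with rfl | hij
      · rw [haj]; linarith [hj.1]
      rcases eq_or_ne i j' with rfl | hij'
      · rw [haj']; linarith
      · rw [haother i hij hij']; exact h0 i
    have ha1 : ∀ i, a i ≤ τ := by
      intro i
      rcases eq_or_ne i j with rfl | hij
      · rw [haj]; linarith
      rcases eq_or_ne i j' with rfl | hij'
      · rw [haj']; linarith [h1 i, hε₁]
      · rw [haother i hij hij']; exact h1 i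
    have hb0 : ∀ i, 0 ≤ b i := by
      intro i
      rcases eq_or_ne i j with rfl | hij
      · rw [hbj]; linarith
      rcases eq_or_ne i j' with rfl | hij'
      · rw [hbj']; linarith [hj'.1, hε₂]
      · rw [hbother i hij hij']; exact h0 i
    have hb1 : ∀ i, b i ≤ τ := by
      intro i
      rcases eq_or_ne i j with rfl | hij
      · rw [hbj]; linarith [h1 i, hε₂]
      rcases eq_or_ne i j' with rfl | hij'
      · rw [hbj']; linarith
      · rw [hbother i hij hij']; exact h1 i
    -- partial-count decreases
    have hcount_gen : ∀ (c : Fin N → ℝ), (∀ i, i ≠ j → i ≠ j' → c i = v i) →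
        (c j = τ ∨ c j = 0 ∨ c j' = τ ∨ c j' = 0) →
        (Finset.univ.filter fun i => 0 < c i ∧ c i < τ).card ≤ k := by
      intro c hco hext
      have hjP : j ∈ Finset.univ.filter fun i => 0 < v i ∧ v i < τ := by
        simp [hj]
      have hj'P : j' ∈ Finset.univ.filter fun i => 0 < v i ∧ v i < τ := by
        simp [hj']
      obtain ⟨tgt, htgtP, htgt⟩ : ∃ tgt, (tgt ∈ Finset.univ.filter fun i => 0 < v i ∧ v i < τ)
          ∧ ¬(0 < c tgt ∧ c tgt < τ) := by
        rcases hext with hc | hc | hc | hc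
        · exact ⟨j, hjP, by rw [hc]; intro hcc; exact lt_irrefl _ hcc.2⟩
        · exact ⟨j, hjP, by rw [hc]; intro hcc; exact lt_irrefl _ hcc.1⟩
        · exact ⟨j', hj'P, by rw [hc]; intro hcc; exact lt_irrefl _ hcc.2⟩
        · exact ⟨j', hj'P, by rw [hc]; intro hcc; exact lt_irrefl _ hcc.1⟩
      have hsub : (Finset.univ.filter fun i => 0 < c i ∧ c i < τ)
          ⊆ (Finset.univ.filter fun i => 0 < v i ∧ v i < τ).erase tgt := by
        intro i hi
        simp only [mem_filter, mem_univ, true_and] at hi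
        have hitgt : i ≠ tgt := by rintro rfl; exact htgt hi
        refine Finset.mem_erase.mpr ⟨hitgt, ?_⟩
        rcases eq_or_ne i j with rfl | hij
        · exact hjP
        rcases eq_or_ne i j' with rfl | hij'
        · exact hj'P
        · rw [hco i hij hij'] at hi; simp [hi]
      have := Finset.card_le_card hsub
      rw [Finset.card_erase_of_mem htgtP] at this
      omega
    have hacount : (Finset.univ.filter fun i => 0 < a i ∧ a i < τ).card ≤ k := by
      apply hcount_gen a haother
      rcases min_cases (τ - v j) (v j') with ⟨hmin, _⟩ | ⟨hmin, _⟩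
      · left; rw [haj, hε₁def, hmin]; ring
      · right; right; right; rw [haj', hε₁def, hmin]; ring
    have hbcount : (Finset.univ.filter fun i => 0 < b i ∧ b i < τ).card ≤ k := by
      apply hcount_gen b hbother
      rcases min_cases (v j) (τ - v j') with ⟨hmin, _⟩ | ⟨hmin, _⟩
      · right; left; rw [hbj, hε₂def, hmin]; ring
      · right; right; left; rw [hbj', hε₂def, hmin]; ring
    have ha : a ∈ convexHull ℝ {w : Fin N → ℝ | (∀ j, 0 ≤ w j) ∧ (∀ j, w j ≤ τ) ∧
        (Finset.univ.filter fun j => w j ≠ 0).card ≤ r} :=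
      ih a ha0 ha1 (by rw [hasum]; exact hsum) hacount
    have hb : b ∈ convexHull ℝ {w : Fin N → ℝ | (∀ j, 0 ≤ w j) ∧ (∀ j, w j ≤ τ) ∧
        (Finset.univ.filter fun j => w j ≠ 0).card ≤ r} :=
      ih b hb0 hb1 (by rw [hbsum]; exact hsum) hbcount
    -- convex combination
    have hεs : 0 < ε₁ + ε₂ := by linarith
    have hcomb : (ε₂ / (ε₁ + ε₂)) • a + (ε₁ / (ε₁ + ε₂)) • b = v := by
      funext i
      simp only [Pi.add_apply, Pi.smul_apply, smul_eq_mul]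
      rcases eq_or_ne i j with rfl | hij
      · rw [haj, hbj]; field_simp; ring
      rcases eq_or_ne i j' with rfl | hij'
      · rw [haj', hbj']; field_simp; ring
      · rw [haother i hij hij', hbother i hij hij']
        field_simp
        ring
    rw [← hcomb]
    exact (convex_convexHull ℝ _) ha hb (by positivity) (by positivity)
      (by field_simp; ring)

lemma norm1_comb_le {ι : Type*} [Fintype ι] (c₁ c₂ : ℝ) (hc₁ : 0 ≤ c₁) (hc₂ : 0 ≤ c₂)
    (z₁ z₂ : ι → ℝ) : norm1 (c₁ • z₁ + c₂ • z₂) ≤ c₁ * norm1 z₁ + c₂ * norm1 z₂ := by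
  unfold norm1
  rw [Finset.mul_sum, Finset.mul_sum, ← Finset.sum_add_distrib]
  apply Finset.sum_le_sum
  intro i _
  simp only [Pi.add_apply, Pi.smul_apply, smul_eq_mul]
  calc |c₁ * z₁ i + c₂ * z₂ i| ≤ |c₁ * z₁ i| + |c₂ * z₂ i| := abs_add_le _ _
    _ = c₁ * |z₁ i| + c₂ * |z₂ i| := by
        rw [abs_mul, abs_mul, abs_of_nonneg hc₁, abs_of_nonneg hc₂]

set_option maxHeartbeats 1000000 in
/-- If A satisfies D-RIP₁(25s, 1/5) and h satisfies ‖Ah‖₁ = 1 and ‖D*h‖₁ ≤ (5/2)√s,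
then ‖D*h‖₂ ≥ 5/12 and hence ‖D*h‖₁ ≤ 6√s‖D*h‖₂ (h is effectively 36s-analysis-sparse). -/
theorem stmt5 (m n N s : ℕ)
    (D : Matrix (Fin n) (Fin N) ℝ) (hD : D * D.transpose = 1)
    (A : Matrix (Fin m) (Fin n) ℝ)
    (hRIP : ∀ x : Fin N → ℝ, (Finset.univ.filter fun j => x j ≠ 0).card ≤ 25 * s →
      (1 - 1/5) * norm2 (D.mulVec x) ≤ norm1 (A.mulVec (D.mulVec x)) ∧
      norm1 (A.mulVec (D.mulVec x)) ≤ (1 + 1/5) * norm2 (D.mulVec x))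
    (h : Fin n → ℝ)
    (hA1 : norm1 (A.mulVec h) = 1)
    (hDh : norm1 (D.transpose.mulVec h) ≤ (5 / 2) * Real.sqrt s) :
    5 / 12 ≤ norm2 (D.transpose.mulVec h) ∧
    norm1 (D.transpose.mulVec h) ≤ 6 * Real.sqrt s * norm2 (D.transpose.mulVec h) := by
  set x := D.transpose.mulVec h with hxdef
  have hhx : D.mulVec x = h := by
    rw [hxdef, Matrix.mulVec_mulVec, hD, Matrix.one_mulVec]
  -- the sign function
  set σ : Fin N → ℝ := fun j => if x j < 0 then -1 else 1 with hσdef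
  have hσabs : ∀ j, σ j * |x j| = x j := by
    intro j
    by_cases hj : x j < 0
    · simp only [hσdef, if_pos hj]
      rw [abs_of_neg hj]; ring
    · simp only [hσdef, if_neg hj]
      rw [abs_of_nonneg (le_of_not_gt hj)]; ring
  have hσsq : ∀ j, σ j ^ 2 = 1 := by
    intro j
    by_cases hj : x j < 0 <;> simp [hσdef, hj]
  -- positivity of L
  have hL0 : 0 ≤ norm1 x := norm1_nonneg x
  have hLpos : 0 < norm1 x := by
    rcases lt_or_eq_of_le hL0 with hpos | heq
    · exact hpos
    · exfalso
      have hx0 : ∀ j, x j = 0 := by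
        intro j
        have := (Finset.sum_eq_zero_iff_of_nonneg (fun i (_ : i ∈ Finset.univ) => abs_nonneg (x i))).mp heq.symm j (Finset.mem_univ j)
        exact abs_eq_zero.mp this
      have : h = 0 := by
        rw [← hhx]
        have : x = 0 := funext hx0
        rw [this, Matrix.mulVec_zero]
      rw [this] at hA1
      simp [norm1, Matrix.mulVec_zero] at hA1
  have hs : 0 < s := by
    rcases Nat.eq_zero_or_pos s with hs0 | hp
    · exfalso
      rw [hs0, Nat.cast_zero, Real.sqrt_zero] at hDh
      linarith
    · exact hp
  set L := norm1 x with hLdef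
  set t : ℕ := 25 * s with htdef
  have ht : 0 < (t : ℝ) := by positivity
  set τ : ℝ := L / t with hτdef
  have hτ : 0 < τ := div_pos hLpos ht
  have hLt : L = t * τ := by rw [hτdef, mul_comm, div_mul_cancel₀ _ (ne_of_gt ht)]
  set H := Finset.univ.filter fun j => τ < |x j| with hHdef
  have hHsum : (H.card : ℝ) * τ ≤ ∑ j ∈ H, |x j| := by
    have := Finset.card_nsmul_le_sum H (fun j => |x j|) τ
      (fun j hj => le_of_lt (by simpa [hHdef] using (Finset.mem_filter.mp hj).2))
    simpa [nsmul_eq_mul] using this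
  have hHL : ∑ j ∈ H, |x j| ≤ L := by
    rw [hLdef]
    exact Finset.sum_le_sum_of_subset_of_nonneg (Finset.subset_univ H)
      (fun j _ _ => abs_nonneg _)
  have hHcard : H.card ≤ t := by
    by_contra hcon
    push_neg at hcon
    have h1 : (t : ℝ) * τ < (H.card : ℝ) * τ := by
      apply mul_lt_mul_of_pos_right _ hτ
      exact_mod_cast hcon
    linarith [hHsum, hHL, hLt.ge]
  set r : ℕ := t - H.card with hrdef
  have hrcast : (r : ℝ) = (t : ℝ) - H.card := by
    rw [hrdef]; push_cast [Nat.cast_sub hHcard]; ring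
  set v : Fin N → ℝ := fun j => if τ < |x j| then 0 else |x j| with hvdef
  have hv0 : ∀ j, 0 ≤ v j := by
    intro j; by_cases hj : τ < |x j| <;> simp [hvdef, hj, abs_nonneg]
  have hv1 : ∀ j, v j ≤ τ := by
    intro j
    by_cases hj : τ < |x j|
    · simp [hvdef, hj, le_of_lt hτ]
    · simp only [hvdef, if_neg hj]; exact le_of_not_gt hj
  have hvsum : ∑ j, v j ≤ r * τ := by
    have hsplit : ∑ j, v j = L - ∑ j ∈ H, |x j| := by
      have : ∀ j, v j = |x j| - (if τ < |x j| then |x j| else 0) := by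
        intro j; by_cases hj : τ < |x j| <;> simp [hvdef, hj]
      rw [Finset.sum_congr rfl (fun j _ => this j), Finset.sum_sub_distrib]
      congr 1
      rw [hHdef, Finset.sum_filter]
    rw [hsplit, hrcast, sub_mul]
    linarith [hHsum, hLt.le, hLt.ge]
  -- the convex decomposition
  have hvhull := decomp_lemma r τ hτ
    ((Finset.univ.filter fun j => 0 < v j ∧ v j < τ).card) v hv0 hv1 hvsum le_rfl
  -- the "lift" map
  set u : (Fin N → ℝ) → (Fin N → ℝ) := fun w => fun j => if τ < |x j| then x j else σ j * w j
    with hudef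
  set B : ℝ := (6/5) * Real.sqrt ((∑ j, x j ^ 2) + τ * L) with hBdef
  set S : Set (Fin N → ℝ) := {w | norm1 (A.mulVec (D.mulVec (u w))) ≤ B} with hSdef
  have hWS : {w : Fin N → ℝ | (∀ j, 0 ≤ w j) ∧ (∀ j, w j ≤ τ) ∧
      (Finset.univ.filter fun j => w j ≠ 0).card ≤ r} ⊆ S := by
    rintro w ⟨hw0, hw1, hwcard⟩
    -- sparsity of u w
    have hsupp : (Finset.univ.filter fun j => u w j ≠ 0)
        ⊆ H ∪ (Finset.univ.filter fun j => w j ≠ 0) := by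
      intro j hj
      simp only [Finset.mem_filter, Finset.mem_univ, true_and] at hj
      by_cases hcase : τ < |x j|
      · exact Finset.mem_union_left _ (by simp [hHdef, hcase])
      · apply Finset.mem_union_right
        simp only [Finset.mem_filter, Finset.mem_univ, true_and]
        intro hw
        apply hj
        simp [hudef, hcase, hw]
    have hcard : (Finset.univ.filter fun j => u w j ≠ 0).card ≤ 25 * s := by
      have h1 := Finset.card_le_card hsupp
      have h2 := Finset.card_union_le H (Finset.univ.filter fun j => w j ≠ 0)
      omega
    have hrip := (hRIP (u w) hcard).2
    -- bound on norm2 (u w)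
    have hsum_uw : ∑ j, (u w j) ^ 2 ≤ (∑ j, x j ^ 2) + τ * L := by
      have hwsum : ∑ j, w j ≤ (r : ℝ) * τ := by
        have heq : ∑ j, w j = ∑ j ∈ Finset.univ.filter (fun j => w j ≠ 0), w j :=
          (Finset.sum_filter_ne_zero Finset.univ).symm
        rw [heq]
        calc ∑ j ∈ Finset.univ.filter (fun j => w j ≠ 0), w j
            ≤ (Finset.univ.filter (fun j => w j ≠ 0)).card • τ :=
              Finset.sum_le_card_nsmul _ _ τ (fun j _ => hw1 j)
          _ = ((Finset.univ.filter (fun j => w j ≠ 0)).card : ℝ) * τ := by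
              rw [nsmul_eq_mul]
          _ ≤ (r : ℝ) * τ := by
              apply mul_le_mul_of_nonneg_right _ (le_of_lt hτ)
              exact_mod_cast hwcard
      have hpt : ∀ j, (u w j) ^ 2 ≤ x j ^ 2 + τ * w j := by
        intro j
        by_cases hcase : τ < |x j|
        · simp only [hudef, if_pos hcase]
          have := mul_nonneg (le_of_lt hτ) (hw0 j)
          linarith
        · simp only [hudef, if_neg hcase]
          have h1 : (σ j * w j) ^ 2 = w j ^ 2 := by
            rw [mul_pow, hσsq j, one_mul]
          have h2 : w j ^ 2 ≤ τ * w j := by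
            nlinarith [hw0 j, hw1 j]
          nlinarith [sq_nonneg (x j)]
      calc ∑ j, (u w j) ^ 2 ≤ ∑ j, (x j ^ 2 + τ * w j) :=
            Finset.sum_le_sum (fun j _ => hpt j)
        _ = (∑ j, x j ^ 2) + τ * ∑ j, w j := by
            rw [Finset.sum_add_distrib, Finset.mul_sum]
        _ ≤ (∑ j, x j ^ 2) + τ * ((r:ℝ) * τ) := by
            have := mul_le_mul_of_nonneg_left hwsum (le_of_lt hτ)
            linarith
        _ ≤ (∑ j, x j ^ 2) + τ * L := by
            have hrt : (r : ℝ) * τ ≤ L := by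
              rw [hrcast, hLt]
              nlinarith [(Nat.cast_nonneg H.card : (0:ℝ) ≤ (H.card : ℝ)), hτ]
            have := mul_le_mul_of_nonneg_left hrt (le_of_lt hτ)
            linarith
    have hn2 : norm2 (D.mulVec (u w)) ≤ Real.sqrt ((∑ j, x j ^ 2) + τ * L) := by
      calc norm2 (D.mulVec (u w)) ≤ norm2 (u w) := norm2_mulVec_le D hD (u w)
        _ = Real.sqrt (∑ j, (u w j) ^ 2) := rfl
        _ ≤ Real.sqrt ((∑ j, x j ^ 2) + τ * L) := Real.sqrt_le_sqrt hsum_uw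
    show norm1 (A.mulVec (D.mulVec (u w))) ≤ B
    rw [hBdef]
    calc norm1 (A.mulVec (D.mulVec (u w))) ≤ (1 + 1/5) * norm2 (D.mulVec (u w)) := hrip
      _ ≤ (6/5) * Real.sqrt ((∑ j, x j ^ 2) + τ * L) := by
          have : (1 + 1/5 : ℝ) = 6/5 := by norm_num
          rw [this]
          exact mul_le_mul_of_nonneg_left hn2 (by norm_num)
  have hSconv : Convex ℝ S := by
    intro w₁ hw₁ w₂ hw₂ c₁ c₂ hc₁ hc₂ hc
    have hukey : u (c₁ • w₁ + c₂ • w₂) = c₁ • (u w₁) + c₂ • (u w₂) := by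
      funext j
      simp only [hudef, Pi.add_apply, Pi.smul_apply, smul_eq_mul]
      by_cases hcase : τ < |x j|
      · simp only [if_pos hcase]
        have : c₁ * x j + c₂ * x j = (c₁ + c₂) * x j := by ring
        rw [this, hc, one_mul]
      · simp only [if_neg hcase]; ring
    show norm1 (A.mulVec (D.mulVec (u (c₁ • w₁ + c₂ • w₂)))) ≤ B
    rw [hukey, Matrix.mulVec_add, Matrix.mulVec_smul, Matrix.mulVec_smul,
      Matrix.mulVec_add, Matrix.mulVec_smul, Matrix.mulVec_smul]
    calc norm1 (c₁ • (A.mulVec (D.mulVec (u w₁))) + c₂ • (A.mulVec (D.mulVec (u w₂))))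
        ≤ c₁ * norm1 (A.mulVec (D.mulVec (u w₁))) + c₂ * norm1 (A.mulVec (D.mulVec (u w₂))) :=
          norm1_comb_le c₁ c₂ hc₁ hc₂ _ _
      _ ≤ c₁ * B + c₂ * B := by
          have b₁ := hw₁
          have b₂ := hw₂
          exact add_le_add (mul_le_mul_of_nonneg_left b₁ hc₁) (mul_le_mul_of_nonneg_left b₂ hc₂)
      _ = B := by rw [← add_mul, hc, one_mul]
  have hvS : v ∈ S := convexHull_min hWS hSconv hvhull
  have huv : u v = x := by
    funext j
    by_cases hcase : τ < |x j|
    · simp [hudef, hcase]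
    · simp only [hudef, hvdef, if_neg hcase]
      exact hσabs j
  have hmain : (1 : ℝ) ≤ B := by
    have := hvS
    rw [hSdef] at this
    simp only [Set.mem_setOf_eq] at this
    rw [huv, hhx, hA1] at this
    exact this
  -- numerics
  have hτL : τ * L ≤ 1/4 := by
    have hsq : L * L ≤ (25/4) * s := by
      have h3 : L * L ≤ ((5/2) * Real.sqrt s) * ((5/2) * Real.sqrt s) :=
        mul_self_le_mul_self hL0 hDh
      have h4 : Real.sqrt s * Real.sqrt s = s := Real.mul_self_sqrt (Nat.cast_nonneg s)
      calc L * L ≤ ((5/2) * Real.sqrt s) * ((5/2) * Real.sqrt s) := h3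
        _ = (25/4) * (Real.sqrt s * Real.sqrt s) := by ring
        _ = (25/4) * s := by rw [h4]
    have ht' : ((t : ℕ) : ℝ) = 25 * (s : ℝ) := by rw [htdef]; push_cast; ring
    rw [hτdef, div_mul_eq_mul_div, div_le_iff₀ ht, ht']
    linarith
  have hB14 : (1 : ℝ) ≤ (6/5) * Real.sqrt ((∑ j, x j ^ 2) + 1/4) := by
    calc (1:ℝ) ≤ B := hmain
      _ ≤ (6/5) * Real.sqrt ((∑ j, x j ^ 2) + 1/4) := by
          rw [hBdef]
          apply mul_le_mul_of_nonneg_left _ (by norm_num)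
          exact Real.sqrt_le_sqrt (by linarith)
  have hsumsq : (4:ℝ)/9 ≤ ∑ j, x j ^ 2 := by
    have h1 : (5/6 : ℝ) ≤ Real.sqrt ((∑ j, x j ^ 2) + 1/4) := by linarith
    have h2 : (5/6 : ℝ)^2 ≤ (∑ j, x j ^ 2) + 1/4 := by
      nlinarith [Real.sq_sqrt (show (0:ℝ) ≤ (∑ j, x j ^ 2) + 1/4 by
        positivity), h1, Real.sqrt_nonneg ((∑ j, x j ^ 2) + 1/4)]
    nlinarith
  have hn2x : (2:ℝ)/3 ≤ norm2 x := by
    have : norm2 x = Real.sqrt (∑ j, x j ^ 2) := rfl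
    rw [this]
    have h49 : ((2:ℝ)/3)^2 ≤ ∑ j, x j ^ 2 := by nlinarith
    nlinarith [Real.sq_sqrt (show (0:ℝ) ≤ ∑ j, x j ^ 2 by positivity),
      Real.sqrt_nonneg (∑ j, x j ^ 2),
      Real.sqrt_le_sqrt h49]
  constructor
  · linarith
  · calc norm1 x ≤ (5/2) * Real.sqrt s := hDh
      _ ≤ 6 * Real.sqrt s * norm2 x := by
          nlinarith [Real.sqrt_nonneg (s : ℝ)]
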